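/- Let n, d ≥ 1 and let H ⊆ ℕ^n be the additive submonoid generated by all vectors in ℕ^n of coordinate sum d except m = (d,0,...,0). A vector z ∈ ℕ^n of coordinate sum t·d (t ≥ 1) belongs to H if and only if the sum of its last n-1 coordinates is at least t. -/

import Mathlib

/-- Pick a pointwise-smaller function with prescribed (smaller) sum. -/
lemma pick_sub {ι : Type*} [DecidableEq ι] (S : Finset ι) (f : ι → ℕ) :
    ∀ k : ℕ, k ≤ ∑ i ∈ S, f i →
      ∃ g : ι → ℕ, (∀ i, g i ≤ f i) ∧ (∀ i ∉ S, g i = 0) ∧ ∑ i ∈ S, g i = k := by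
  induction S using Finset.induction_on with
  | empty =>
    intro k hk
    simp only [Finset.sum_empty, Nat.le_zero] at hk
    exact ⟨0, fun i => Nat.zero_le _, fun i _ => rfl, by simp [hk]⟩
  | @insert a S ha ih =>
    intro k hk
    rw [Finset.sum_insert ha] at hk
    have hk2 : k - min k (f a) ≤ ∑ i ∈ S, f i := by
      have := Nat.min_le_left k (f a)
      have := Nat.min_le_right k (f a)
      omega
    obtain ⟨g, hg1, hg2, hg3⟩ := ih (k - min k (f a)) hk2
    refine ⟨fun i => if i = a then min k (f a) else g i, ?_, ?_, ?_⟩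
    · intro i
      by_cases h : i = a
      · subst h; simp [Nat.min_le_right]
      · simp [h, hg1 i]
    · intro i hi
      have h1 : i ≠ a := fun h => hi (h ▸ Finset.mem_insert_self a S)
      have h2 : i ∉ S := fun h => hi (Finset.mem_insert_of_mem h)
      simp [h1, hg2 i h2]
    · rw [Finset.sum_insert ha, if_pos rfl,
        Finset.sum_congr rfl (fun i hi => if_neg (fun h : i = a => ha (h ▸ hi))), hg3]
      omega

lemma back_aux (n d : ℕ) (hn : 1 ≤ n) (hd : 1 ≤ d) :
    ∀ t, 1 ≤ t → ∀ z : Fin n → ℕ, (∑ i, z i) = t * d →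
      t ≤ ∑ i ∈ Finset.univ.erase (⟨0, hn⟩ : Fin n), z i →
      z ∈ AddSubmonoid.closure
        {a : Fin n → ℕ | (∑ i, a i) = d ∧
          a ≠ fun i => if i = (⟨0, hn⟩ : Fin n) then d else 0} := by
  intro t
  induction t with
  | zero => intro h; omega
  | succ t ih =>
    intro _ z hz hq
    set i0 : Fin n := ⟨0, hn⟩ with hi0
    have hsplit : ∀ w : Fin n → ℕ,
        (∑ i, w i) = w i0 + ∑ i ∈ Finset.univ.erase i0, w i :=
      fun w => (Finset.add_sum_erase _ _ (Finset.mem_univ i0)).symm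
    by_cases ht : t = 0
    · subst ht
      refine AddSubmonoid.subset_closure ⟨by simpa using hz, ?_⟩
      -- z ≠ m since some off-coordinate is positive
      obtain ⟨i, hi, hzi⟩ : ∃ i ∈ Finset.univ.erase i0, z i ≠ 0 := by
        apply Finset.exists_ne_zero_of_sum_ne_zero
        omega
      intro h
      have := congrFun h i
      have hine : i ≠ i0 := (Finset.mem_erase.mp hi).1
      simp [hine] at this
      exact hzi this
    · have ht1 : 1 ≤ t := by omega
      set q := ∑ i ∈ Finset.univ.erase i0, z i with hqdef
      set s := min (q - t) d with hsdef
      have hs1 : 1 ≤ s := le_min (by omega) hd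
      have hsd : s ≤ d := Nat.min_le_right _ _
      have hsq : s ≤ q - t := Nat.min_le_left _ _
      obtain ⟨g, hg1, hg2, hg3⟩ :=
        pick_sub (Finset.univ.erase i0) z s (by omega)
      have hzq : (t + 1) * d = z i0 + q := by rw [← hz]; exact hsplit z
      have hmul : (t + 1) * d = t * d + d := by ring
      have htT : t ≤ t * d := Nat.le_mul_of_pos_right t (by omega)
      have hscase : s = q - t ∨ s = d := by
        rcases le_total (q - t) d with h | h
        · exact Or.inl (min_eq_left h)
        · exact Or.inr (min_eq_right h)
      have ha0 : d - s ≤ z i0 := by omega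
      set a : Fin n → ℕ := fun i => if i = i0 then d - s else g i with hadef
      have hale : ∀ i, a i ≤ z i := by
        intro i
        by_cases h : i = i0
        · subst h; simpa [hadef] using ha0
        · simpa [hadef, h] using hg1 i
      have hsuma : (∑ i, a i) = d := by
        rw [hsplit a]
        have : ∑ i ∈ Finset.univ.erase i0, a i = s := by
          rw [← hg3]
          refine Finset.sum_congr rfl fun i hi => ?_
          simp [hadef, (Finset.mem_erase.mp hi).1]
        rw [this]
        simp only [hadef, if_pos rfl]
        omega
      set b : Fin n → ℕ := fun i => z i - a i with hbdef
      have hzab : z = a + b := by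
        funext i
        have := hale i
        simp only [Pi.add_apply, hbdef]
        omega
      have hsumb : (∑ i, b i) = t * d := by
        have : (∑ i, z i) = (∑ i, a i) + (∑ i, b i) := by
          rw [hzab]; simp [Finset.sum_add_distrib]
        omega
      have hoffb : ∑ i ∈ Finset.univ.erase i0, b i = q - s := by
        have h1 : q = (∑ i ∈ Finset.univ.erase i0, a i) +
            ∑ i ∈ Finset.univ.erase i0, b i := by
          rw [hqdef, hzab]; simp [Finset.sum_add_distrib]
        have h2 : ∑ i ∈ Finset.univ.erase i0, a i = s := by
          rw [← hg3]
          refine Finset.sum_congr rfl fun i hi => ?_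
          simp [hadef, (Finset.mem_erase.mp hi).1]
        omega
      have haA : a ∈ {a : Fin n → ℕ | (∑ i, a i) = d ∧
          a ≠ fun i => if i = i0 then d else 0} := by
        refine ⟨hsuma, ?_⟩
        obtain ⟨i, hi, hgi⟩ : ∃ i ∈ Finset.univ.erase i0, g i ≠ 0 := by
          apply Finset.exists_ne_zero_of_sum_ne_zero
          omega
        intro h
        have := congrFun h i
        have hine : i ≠ i0 := (Finset.mem_erase.mp hi).1
        simp [hadef, hine] at this
        exact hgi this
      rw [hzab]
      exact AddSubmonoid.add_mem _ (AddSubmonoid.subset_closure haA)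
        (ih ht1 b hsumb (by omega))

/-- Membership in the semigroup of `P_{n,d,(d,0,…,0)}`: a vector `z ∈ ℕ^n` of
coordinate sum `t·d` (`t ≥ 1`) lies in `H` iff the sum of its last `n-1`
coordinates is at least `t`. -/
theorem stmt_2 (n d : ℕ) (hn : 1 ≤ n) (hd : 1 ≤ d)
    (m : Fin n → ℕ) (hm : m = fun i => if i = (⟨0, hn⟩ : Fin n) then d else 0)
    (A : Set (Fin n → ℕ)) (hA : A = {a | (∑ i, a i) = d ∧ a ≠ m})
    (z : Fin n → ℕ) (t : ℕ) (ht : 1 ≤ t) (hz : (∑ i, z i) = t * d) :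
    z ∈ AddSubmonoid.closure A ↔
      t ≤ ∑ i ∈ Finset.univ.erase (⟨0, hn⟩ : Fin n), z i := by
  subst hm hA
  set i0 : Fin n := ⟨0, hn⟩ with hi0
  have hsplit : ∀ w : Fin n → ℕ,
      (∑ i, w i) = w i0 + ∑ i ∈ Finset.univ.erase i0, w i :=
    fun w => (Finset.add_sum_erase _ _ (Finset.mem_univ i0)).symm
  constructor
  · intro hzH
    have key : ∀ w ∈ AddSubmonoid.closure
        {a : Fin n → ℕ | (∑ i, a i) = d ∧
          a ≠ fun i => if i = i0 then d else 0},
        (∑ i, w i) ≤ d * ∑ i ∈ Finset.univ.erase i0, w i := by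
      intro w hw
      induction hw using AddSubmonoid.closure_induction with
      | mem a ha =>
        obtain ⟨hsa, hane⟩ := ha
        have hpos : 1 ≤ ∑ i ∈ Finset.univ.erase i0, a i := by
          by_contra h
          push_neg at h
          have hoff : ∀ i ∈ Finset.univ.erase i0, a i = 0 := by
            intro i hi
            have := Finset.single_le_sum (f := a) (fun j _ => Nat.zero_le _) hi
            omega
          apply hane
          funext i
          by_cases hie : i = i0
          · subst hie
            have := hsplit a
            have hzero : ∑ i ∈ Finset.univ.erase i0, a i = 0 := by omega
            rw [if_pos rfl]
            omega
          · simp [hie, hoff i (Finset.mem_erase.mpr ⟨hie, Finset.mem_univ i⟩)]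
        calc (∑ i, a i) = d := hsa
          _ = d * 1 := by ring
          _ ≤ d * ∑ i ∈ Finset.univ.erase i0, a i :=
            Nat.mul_le_mul_left d hpos
      | zero => simp
      | add x y hx hy ihx ihy =>
        have h1 : (∑ i, (x + y) i) = (∑ i, x i) + ∑ i, y i := by
          simp [Finset.sum_add_distrib]
        have h2 : ∑ i ∈ Finset.univ.erase i0, (x + y) i =
            (∑ i ∈ Finset.univ.erase i0, x i) +
              ∑ i ∈ Finset.univ.erase i0, y i := by
          simp [Finset.sum_add_distrib]
        rw [h1, h2, Nat.mul_add]
        exact Nat.add_le_add ihx ihy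
    have := key z hzH
    rw [hz] at this
    rw [mul_comm d] at this
    exact Nat.le_of_mul_le_mul_right this (by omega)
  · intro hq
    exact back_aux n d hn hd t ht z hz hq
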